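/- arXiv:2005.11688 — 6 statements merged into one kernel-verified Lean document; each statement's English description precedes it below -/
import Mathlib

section
/- (WDec correctness) Let N ≥ 2 be a natural number, let g be a unit of ZMod (N²), let sk, r, m be natural numbers with m < N, and write ν for the image of N in ZMod (N²). Set C₁ := ((g : ZMod (N²))^{sk})^{r} · (1 + (m : ZMod (N²))·ν) and C₂ := g^{r} (a unit). Then C₁ · ((C₂^{sk})⁻¹ : ZMod (N²)) = 1 + m·ν, the canonical representative (val) of this element of ZMod (N²) equals the natural number 1 + m·N, and hence ((C₁ · ((C₂^{sk})⁻¹)).val − 1) / N = m. -/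
theorem pctd_wdec_correctness (N : ℕ) (hN : 2 ≤ N)
    (g : (ZMod (N ^ 2))ˣ) (sk r m : ℕ) (hm : m < N)
    (ν : ZMod (N ^ 2)) (hν : ν = (N : ZMod (N ^ 2)))
    (C₁ : ZMod (N ^ 2)) (hC₁ : C₁ = ((g : ZMod (N ^ 2)) ^ sk) ^ r * (1 + (m : ZMod (N ^ 2)) * ν))
    (C₂ : (ZMod (N ^ 2))ˣ) (hC₂ : C₂ = g ^ r) :
    C₁ * (((C₂ ^ sk : (ZMod (N ^ 2))ˣ) : ZMod (N ^ 2))⁻¹ : ZMod (N ^ 2))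
        = 1 + (m : ZMod (N ^ 2)) * ν ∧
    (C₁ * (((C₂ ^ sk : (ZMod (N ^ 2))ˣ) : ZMod (N ^ 2))⁻¹ : ZMod (N ^ 2))).val = 1 + m * N ∧
    ((C₁ * (((C₂ ^ sk : (ZMod (N ^ 2))ˣ) : ZMod (N ^ 2))⁻¹ : ZMod (N ^ 2))).val - 1) / N = m := by
  have hNpos : 0 < N := by omega
  have hmain : C₁ * (((C₂ ^ sk : (ZMod (N ^ 2))ˣ) : ZMod (N ^ 2))⁻¹ : ZMod (N ^ 2))
      = 1 + (m : ZMod (N ^ 2)) * ν := by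
    rw [ZMod.inv_coe_unit, hC₁, hC₂]
    have : ((g ^ r) ^ sk)⁻¹ = ((g ^ sk) ^ r)⁻¹ := by
      rw [← pow_mul, ← pow_mul, Nat.mul_comm]
    rw [this]
    rw [mul_comm _ (1 + (m : ZMod (N ^ 2)) * ν), mul_assoc]
    rw [← Units.val_pow_eq_pow_val, ← Units.val_pow_eq_pow_val, ← Units.val_mul, mul_inv_cancel, Units.val_one, mul_one]
  have hlt : 1 + m * N < N ^ 2 := by nlinarith
  have hval : (C₁ * (((C₂ ^ sk : (ZMod (N ^ 2))ˣ) : ZMod (N ^ 2))⁻¹ : ZMod (N ^ 2))).val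
      = 1 + m * N := by
    rw [hmain, hν]
    have : (1 : ZMod (N ^ 2)) + (m : ZMod (N ^ 2)) * (N : ZMod (N ^ 2))
        = ((1 + m * N : ℕ) : ZMod (N ^ 2)) := by push_cast; ring
    rw [this, ZMod.val_natCast, Nat.mod_eq_of_lt hlt]
  refine ⟨hmain, hval, ?_⟩
  rw [hval]
  simp [Nat.mul_div_cancel _ hNpos]
end

section
/- (SDec correctness) Let N ≥ 2 and λ ≥ 1 be natural numbers with λ coprime to N, let pk be a unit of ZMod (N²) satisfying pk^{λ} = 1, let r, m be natural numbers with m < N, and write ν for the image of N in ZMod (N²). Set C₁ := (pk : ZMod (N²))^{r} · (1 + (m : ZMod (N²))·ν). Then C₁^{λ} = 1 + ((λ·m : ℕ) : ZMod (N²))·ν, and letting D := ((C₁^{λ}).val − 1) / N (a natural number), one has ((D : ZMod N)) · ((λ : ZMod N))⁻¹ = (m : ZMod N); i.e., the master-key decryption m = L(C₁^{λ})·λ⁻¹ mod N recovers the message. -/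
lemma one_add_sq_zero_pow {R : Type*} [CommRing R] (a : R) (h : a * a = 0) (n : ℕ) :
    (1 + a) ^ n = 1 + (n : R) * a := by
  induction n with
  | zero => simp
  | succ n ih =>
    rw [pow_succ, ih]
    push_cast
    linear_combination (n : R) * h

theorem pctd_sdec_correctness (N lam : ℕ) (hN : 2 ≤ N) (hlam : 1 ≤ lam)
    (hco : Nat.Coprime lam N)
    (pk : (ZMod (N ^ 2))ˣ) (hpk : pk ^ lam = 1)
    (r m : ℕ) (hm : m < N)
    (ν : ZMod (N ^ 2)) (hν : ν = (N : ZMod (N ^ 2)))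
    (C₁ : ZMod (N ^ 2))
    (hC₁ : C₁ = ((pk : ZMod (N ^ 2)) ^ r) * (1 + (m : ZMod (N ^ 2)) * ν)) :
    C₁ ^ lam = 1 + ((lam * m : ℕ) : ZMod (N ^ 2)) * ν ∧
    ((((C₁ ^ lam).val - 1) / N : ℕ) : ZMod N) * ((lam : ZMod N))⁻¹ = (m : ZMod N) := by
  have hNpos : 0 < N := by omega
  have hνν : ν * ν = 0 := by
    rw [hν, ← Nat.cast_mul, ← sq, ZMod.natCast_self]
  have haa : (m : ZMod (N ^ 2)) * ν * ((m : ZMod (N ^ 2)) * ν) = 0 := by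
    rw [mul_mul_mul_comm, hνν, mul_zero]
  have hpk1 : ((pk : ZMod (N ^ 2)) ^ r) ^ lam = 1 := by
    rw [← pow_mul, mul_comm, pow_mul, ← Units.val_pow_eq_pow_val, hpk, Units.val_one, one_pow]
  have h1 : C₁ ^ lam = 1 + ((lam * m : ℕ) : ZMod (N ^ 2)) * ν := by
    rw [hC₁, mul_pow, hpk1, one_mul, one_add_sq_zero_pow _ haa]
    push_cast
    ring
  refine ⟨h1, ?_⟩
  -- reduce lam*m mod N
  set k := (lam * m) % N with hk
  have hkN : k < N := Nat.mod_lt _ hNpos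
  have hNN : (N : ZMod (N ^ 2)) * N = 0 := by
    rw [← Nat.cast_mul, ← sq, ZMod.natCast_self]
  have hred : ((lam * m : ℕ) : ZMod (N ^ 2)) * ν = ((k : ℕ) : ZMod (N ^ 2)) * ν := by
    rw [hν, hk]
    conv_lhs => rw [← Nat.div_add_mod (lam * m) N]
    push_cast
    linear_combination ((lam * m / N : ℕ) : ZMod (N ^ 2)) * hNN
  have hC : C₁ ^ lam = ((1 + k * N : ℕ) : ZMod (N ^ 2)) := by
    rw [h1, hred, hν]
    push_cast
    ring
  have hlt : 1 + k * N < N ^ 2 := by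
    have : k * N ≤ (N - 1) * N := Nat.mul_le_mul_right _ (by omega)
    nlinarith
  have hval : (C₁ ^ lam).val = 1 + k * N := by
    rw [hC, ZMod.val_natCast_of_lt hlt]
  have hD : ((C₁ ^ lam).val - 1) / N = k := by
    rw [hval]
    simp [Nat.mul_div_cancel _ hNpos]
  rw [hD]
  have hkcast : ((k : ℕ) : ZMod N) = ((lam * m : ℕ) : ZMod N) := by
    rw [hk]; exact ZMod.natCast_mod _ _
  rw [hkcast]
  have hu : IsUnit (lam : ZMod N) := by
    have : NeZero N := ⟨by omega⟩
    exact (ZMod.isUnit_iff_coprime lam N).mpr hco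
  push_cast
  rw [mul_comm (lam : ZMod N) (m : ZMod N), mul_assoc, ZMod.mul_inv_of_unit _ hu, mul_one]
end

section
/- (PD1/PD2 correctness) Let N ≥ 2 and λ ≥ 1 be natural numbers, let pk be a unit of ZMod (N²) with pk^{λ} = 1, and let σ, r, m be natural numbers with m < N, σ ≡ 0 (mod λ) (i.e. λ ∣ σ) and σ ≡ 1 (mod N²). Write ν for the image of N in ZMod (N²) and set C₁ := (pk : ZMod (N²))^{r} · (1 + (m : ZMod (N²))·ν). Then C₁^{σ} = 1 + m·ν, and consequently ((C₁^{σ}).val − 1) / N = m; i.e., combining the two partial decryptions C₁^{λ₁} · C₁^{λ₂} = C₁^{λ₁+λ₂} recovers the plaintext m. -/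
lemma one_add_pow_of_sq_zero {R : Type*} [CommRing R] (x : R) (hx : x * x = 0) (n : ℕ) :
    (1 + x) ^ n = 1 + (n : R) * x := by
  induction n with
  | zero => simp
  | succ k ih =>
    have hx2 : x ^ 2 = 0 := by rw [pow_two, hx]
    rw [pow_succ, ih]
    push_cast
    ring_nf
    rw [hx2]
    ring

theorem pctd_pd_correctness (N lam : ℕ) (hN : 2 ≤ N) (hlam : 1 ≤ lam)
    (pk : (ZMod (N ^ 2))ˣ) (hpk : pk ^ lam = 1)
    (σ r m : ℕ) (hm : m < N) (hσ0 : lam ∣ σ) (hσ1 : σ ≡ 1 [MOD N ^ 2])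
    (ν : ZMod (N ^ 2)) (hν : ν = (N : ZMod (N ^ 2)))
    (C₁ : ZMod (N ^ 2))
    (hC₁ : C₁ = ((pk : ZMod (N ^ 2)) ^ r) * (1 + (m : ZMod (N ^ 2)) * ν)) :
    C₁ ^ σ = 1 + (m : ZMod (N ^ 2)) * ν ∧ ((C₁ ^ σ).val - 1) / N = m := by
  have hNpos : 0 < N := by omega
  have hN2 : 1 < N ^ 2 := by nlinarith
  have hx : ((m : ZMod (N ^ 2)) * ν) * ((m : ZMod (N ^ 2)) * ν) = 0 := by
    have hνν : ν * ν = 0 := by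
      rw [hν, ← Nat.cast_mul, ← pow_two, ZMod.natCast_self]
    rw [mul_mul_mul_comm, hνν, mul_zero]
  have hσcast : ((σ : ℕ) : ZMod (N ^ 2)) = 1 := by
    have := (ZMod.natCast_eq_natCast_iff σ 1 (N ^ 2)).mpr hσ1
    simpa using this
  obtain ⟨k, hk⟩ := hσ0
  have hpkσ : ((pk : ZMod (N ^ 2)) ^ r) ^ σ = 1 := by
    have : (pk ^ r) ^ σ = 1 := by
      rw [hk, ← pow_mul, show r * (lam * k) = lam * (r * k) by ring, pow_mul, hpk, one_pow]
    calc ((pk : ZMod (N ^ 2)) ^ r) ^ σ = (((pk ^ r) ^ σ : (ZMod (N ^ 2))ˣ) : ZMod (N ^ 2)) := by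
          push_cast; ring
      _ = 1 := by rw [this]; rfl
  have hmain : C₁ ^ σ = 1 + (m : ZMod (N ^ 2)) * ν := by
    rw [hC₁, mul_pow, hpkσ, one_mul, one_add_pow_of_sq_zero _ hx, hσcast, one_mul]
  refine ⟨hmain, ?_⟩
  have hval : (C₁ ^ σ).val = 1 + m * N := by
    rw [hmain, hν]
    have : (1 : ZMod (N ^ 2)) + (m : ZMod (N ^ 2)) * (N : ZMod (N ^ 2))
        = ((1 + m * N : ℕ) : ZMod (N ^ 2)) := by push_cast; ring
    rw [this, ZMod.val_natCast_of_lt]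
    nlinarith
  rw [hval]
  simp [Nat.mul_div_cancel _ hNpos]
end

section
/- (SMin Step 2 masked comparison correctness) Let ℓ be a natural number with 16 ≤ ℓ and 8 ∣ ℓ, and let N be a natural number with 2^{ℓ−1} ≤ N. Let a, b, r', r be natural numbers with a ≠ b, a < 2^{ℓ/8}, b < 2^{ℓ/8}, 2^{ℓ/8} ≤ r' < 2^{ℓ/4 − 1}, and r < 2^{ℓ/8}. Let z be the integer r'·((a : ℤ) − (b : ℤ)) + r and let ρ be the canonical nonnegative representative of z modulo N. Then ρ < 2^{ℓ/2} if and only if b < a. (Hence the server's test 'bit length of the decrypted residue exceeds ℓ/2' holds exactly when a < b.) -/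
theorem smin_masked_comparison (ℓ N : ℕ) (hℓ16 : 16 ≤ ℓ) (hℓ8 : 8 ∣ ℓ)
    (hN : 2 ^ (ℓ - 1) ≤ N)
    (a b r' r : ℕ) (hab : a ≠ b)
    (ha : a < 2 ^ (ℓ / 8)) (hb : b < 2 ^ (ℓ / 8))
    (hr'lo : 2 ^ (ℓ / 8) ≤ r') (hr'hi : r' < 2 ^ (ℓ / 4 - 1))
    (hr : r < 2 ^ (ℓ / 8)) :
    ((r' : ℤ) * ((a : ℤ) - (b : ℤ)) + (r : ℤ)) % (N : ℤ) < 2 ^ (ℓ / 2) ↔ b < a := by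
  obtain ⟨k, rfl⟩ := hℓ8
  have hk : 2 ≤ k := by omega
  have e8 : 8 * k / 8 = k := by omega
  have e4 : 8 * k / 4 - 1 = 2 * k - 1 := by omega
  have e2 : 8 * k / 2 = 4 * k := by omega
  rw [e8] at ha hb hr'lo hr
  rw [e4] at hr'hi
  rw [e2]
  have hpow : ∀ m n : ℕ, m ≤ n → (2:ℤ) ^ m ≤ 2 ^ n :=
    fun m n h => pow_le_pow_right₀ (by norm_num) h
  have hN' : (2:ℤ) ^ (8 * k - 1) ≤ (N : ℤ) := by exact_mod_cast hN
  have ha' : (a : ℤ) < 2 ^ k := by exact_mod_cast ha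
  have hb' : (b : ℤ) < 2 ^ k := by exact_mod_cast hb
  have hr'lo' : (2:ℤ) ^ k ≤ (r' : ℤ) := by exact_mod_cast hr'lo
  have hr'hi' : (r' : ℤ) < 2 ^ (2 * k - 1) := by exact_mod_cast hr'hi
  have hr'' : (r : ℤ) < 2 ^ k := by exact_mod_cast hr
  have han : (0:ℤ) ≤ a := Int.ofNat_nonneg a
  have hbn : (0:ℤ) ≤ b := Int.ofNat_nonneg b
  have hrn : (0:ℤ) ≤ r := Int.ofNat_nonneg r
  have hr'n : (0:ℤ) ≤ r' := Int.ofNat_nonneg r'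
  have p1 : (2:ℤ) ^ (2 * k - 1) * 2 ^ k = 2 ^ (3 * k - 1) := by
    rw [← pow_add]; congr 1; omega
  have p2 : (2:ℤ) ^ k ≤ 2 ^ (3 * k - 1) := hpow _ _ (by omega)
  have p3 : (2:ℤ) ^ (3 * k) = 2 ^ (3 * k - 1) * 2 := by
    rw [← pow_succ]; congr 1; omega
  have p4 : (2:ℤ) ^ (3 * k) ≤ 2 ^ (4 * k) := hpow _ _ (by omega)
  have p5 : (2:ℤ) ^ (3 * k) ≤ 2 ^ (8 * k - 1) := hpow _ _ (by omega)
  have p6 : (2:ℤ) ^ (3 * k - 1) ≤ 2 ^ (8 * k - 2) := hpow _ _ (by omega)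
  have p7 : (2:ℤ) ^ (4 * k) ≤ 2 ^ (8 * k - 2) := hpow _ _ (by omega)
  have p8 : (2:ℤ) ^ (8 * k - 1) = 2 ^ (8 * k - 2) * 2 := by
    rw [← pow_succ]; congr 1; omega
  set z : ℤ := (r' : ℤ) * ((a : ℤ) - (b : ℤ)) + (r : ℤ) with hz
  have hNpos : (0:ℤ) < N := lt_of_lt_of_le (by positivity) hN'
  by_cases h : b < a
  · have h1 : (1:ℤ) ≤ (a : ℤ) - b := by
      have : (b:ℤ) < a := by exact_mod_cast h
      linarith
    have hz0 : 0 ≤ z := by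
      have : 0 ≤ (r' : ℤ) * ((a : ℤ) - b) := mul_nonneg hr'n (by linarith)
      linarith
    have hub : z < 2 ^ (3 * k) := by
      have h2 : (r' : ℤ) * ((a : ℤ) - b) ≤ r' * a := by
        have := mul_le_mul_of_nonneg_left (show (a:ℤ) - b ≤ a by linarith) hr'n
        linarith
      have h3 : (r' : ℤ) * a < 2 ^ (2 * k - 1) * 2 ^ k := by
        rcases eq_or_lt_of_le han with heq | hlt
        · rw [← heq]; simpa using by positivity
        · exact mul_lt_mul'' hr'hi' ha' hr'n han
      linarith
    have : z % N = z := Int.emod_eq_of_lt hz0 (by linarith)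
    rw [this]
    simp only [h, iff_true]
    calc z < 2 ^ (3 * k) := hub
    _ ≤ 2 ^ (4 * k) := p4
  · have hba : a < b := by omega
    have h1 : (a : ℤ) - b ≤ -1 := by
      have : (a:ℤ) < b := by exact_mod_cast hba
      linarith
    have hzneg : z < 0 := by
      have : (r' : ℤ) * ((a : ℤ) - b) ≤ r' * (-1) := mul_le_mul_of_nonneg_left h1 hr'n
      have h2 : (r' : ℤ) * (-1) = -r' := by ring
      linarith
    have hrb : (r' : ℤ) * b < 2 ^ (2 * k - 1) * 2 ^ k := by
      rcases eq_or_lt_of_le hbn with heq | hlt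
      · rw [← heq]; simpa using by positivity
      · exact mul_lt_mul'' hr'hi' hb' hr'n hbn
    have hzlb : -(2 ^ (3 * k - 1)) < z := by
      have : (r' : ℤ) * ((a : ℤ) - b) = r' * a - r' * b := by ring
      have h2 : 0 ≤ (r' : ℤ) * a := mul_nonneg hr'n han
      linarith
    have hmod : z % N = z + N := by
      have h3 : (z + N) % N = z % N := by
        have := Int.add_mul_emod_self_left (a := z) (b := (N:ℤ)) (c := 1)
        simpa using this
      have h4 : (z + N) % N = z + N :=
        Int.emod_eq_of_lt (by linarith) (by linarith)
      linarith [h3, h4]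
    rw [hmod]
    simp only [h, iff_false, not_lt]
    linarith
end

section
/- (BPS-k correctness) Let n, k, MWeight be natural numbers with k ≤ n, and let w : Fin n → ℕ satisfy 0 < w i and w i < MWeight for every i. Define the following k-round procedure: start with v⁰ := w; in round t (1 ≤ t ≤ k), let i_t be the least index at which v^{t−1} attains its minimum, output o_t := v^{t−1} i_t, and set v^t := the function v^{t−1} updated at i_t to the value o_t · MWeight. Then the output list (o_1, …, o_k) is nondecreasing and equals the first k entries of the multiset of values {w i : i} listed in nondecreasing order; i.e., the procedure returns exactly the k smallest weights, smallest first. -/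
/-- **BPS-k correctness.** The `k`-round minimum-extraction procedure of P-Med is described
by its trace: `v t` is the weight vector before round `t+1` (`v 0 = w`), `idx t` is the least
index at which `v t` attains its minimum, `o t` is the value output in round `t+1`, and the
selected entry is multiplied by `MWeight` afterwards. The outputs, in order, are exactly the
`k` smallest entries of `w`, listed nondecreasingly. -/
theorem bps_k_correctness (n k MWeight : ℕ) (hk : k ≤ n)
    (w : Fin n → ℕ) (hw : ∀ i, 0 < w i ∧ w i < MWeight)
    (v : ℕ → Fin n → ℕ) (idx : ℕ → Fin n) (o : ℕ → ℕ)
    (hv0 : v 0 = w)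
    (hmin : ∀ t < k, ∀ j, v t (idx t) ≤ v t j)
    (hleast : ∀ t < k, ∀ i : Fin n, (∀ j, v t i ≤ v t j) → idx t ≤ i)
    (ho : ∀ t < k, o t = v t (idx t))
    (hupd : ∀ t < k, v (t + 1) = Function.update (v t) (idx t) (o t * MWeight)) :
    (List.ofFn fun t : Fin k => o t).Pairwise (· ≤ ·) ∧
    (List.ofFn fun t : Fin k => o t)
      = (Multiset.sort (Multiset.map w Finset.univ.val) (· ≤ ·)).take k := by
  classical
  -- there is always an unselected index before round k
  have exists_unsel : ∀ t < k, ∃ j : Fin n, ¬ ∃ s, s < t ∧ idx s = j := by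
    intro t ht
    by_contra h
    push_neg at h
    have hsurj : Function.Surjective (fun s : Fin t => idx (s : ℕ)) := by
      intro j
      obtain ⟨s, hs, he⟩ := h j
      exact ⟨⟨s, hs⟩, he⟩
    have := Fintype.card_le_of_surjective _ hsurj
    simp only [Fintype.card_fin] at this
    omega
  -- the freshness argument, parameterized by the invariant at time t
  have freshAux : ∀ t < k,
      (∀ i, v t i = if ∃ s, s < t ∧ idx s = i then w i * MWeight else w i) →
      ¬ ∃ s, s < t ∧ idx s = idx t := by
    intro t htk Qt hex
    obtain ⟨j, hj⟩ := exists_unsel t htk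
    have hvj : v t j = w j := by rw [Qt j, if_neg hj]
    have hvi : v t (idx t) = w (idx t) * MWeight := by rw [Qt (idx t), if_pos hex]
    have h1 : MWeight ≤ w (idx t) * MWeight := Nat.le_mul_of_pos_left _ (hw (idx t)).1
    have h2 := hmin t htk j
    have h3 := (hw j).2
    omega
  -- the state invariant
  have Q : ∀ t, t ≤ k →
      ∀ i, v t i = if ∃ s, s < t ∧ idx s = i then w i * MWeight else w i := by
    intro t
    induction t with
    | zero => intro _ i; simp [hv0]
    | succ t ih =>
      intro ht i
      have htk : t < k := ht
      have ihQ := ih htk.le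
      have fresh := freshAux t htk ihQ
      rw [hupd t htk]
      by_cases hcase : i = idx t
      · subst hcase
        rw [Function.update_self, ho t htk, ihQ (idx t), if_neg fresh,
          if_pos ⟨t, Nat.lt_succ_self t, rfl⟩]
      · rw [Function.update_of_ne hcase, ihQ i]
        by_cases hc2 : ∃ s, s < t ∧ idx s = i
        · obtain ⟨s, hs, he⟩ := hc2
          rw [if_pos ⟨s, hs, he⟩, if_pos ⟨s, hs.trans (Nat.lt_succ_self t), he⟩]
        · rw [if_neg hc2, if_neg ?_]
          rintro ⟨s, hs, he⟩
          rcases Nat.lt_succ_iff_lt_or_eq.mp hs with h | h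
          · exact hc2 ⟨s, h, he⟩
          · subst h; exact hcase he.symm
  have fresh : ∀ t < k, ¬ ∃ s, s < t ∧ idx s = idx t := fun t ht =>
    freshAux t ht (Q t ht.le)
  -- outputs are the original weights at the selected indices
  have hoW : ∀ t < k, o t = w (idx t) := by
    intro t ht
    rw [ho t ht, Q t ht.le, if_neg (fresh t ht)]
  -- outputs are nondecreasing
  have mono : ∀ s t : ℕ, s < t → t < k → o s ≤ o t := by
    intro s t hst htk
    have hsk : s < k := hst.trans htk
    have h1 := hmin s hsk (idx t)
    have h2 : v s (idx t) = w (idx t) := by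
      rw [Q s hsk.le, if_neg]
      rintro ⟨r, hr, he⟩
      exact fresh t htk ⟨r, hr.trans hst, he⟩
    rw [h2] at h1
    rw [ho s hsk, hoW t htk]
    exact h1
  -- outputs are bounded by every never-selected weight
  have hbound : ∀ t < k, ∀ j : Fin n, (¬ ∃ s, s < k ∧ idx s = j) → o t ≤ w j := by
    intro t ht j hj
    have h2 : v t j = w j := by
      rw [Q t ht.le, if_neg]
      rintro ⟨s, hs, he⟩
      exact hj ⟨s, hs.trans ht, he⟩
    have h1 := hmin t ht j
    rw [h2] at h1
    rw [ho t ht]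
    exact h1
  -- selected indices are pairwise distinct
  have hinj : Function.Injective (fun t : Fin k => idx (t : ℕ)) := by
    intro a b hab
    simp only at hab
    rcases lt_trichotomy (a : ℕ) (b : ℕ) with h | h | h
    · exact absurd ⟨(a : ℕ), h, hab⟩ (fresh b b.isLt)
    · exact Fin.ext h
    · exact absurd ⟨(b : ℕ), h, hab.symm⟩ (fresh a a.isLt)
  set p : Fin n → Prop := fun i => ∃ s, s < k ∧ idx s = i with hp
  set L1 : List ℕ := List.ofFn fun t : Fin k => o t with hL1def
  set L2 : List ℕ :=
    Multiset.sort (Multiset.map w (Finset.univ.filter fun i => ¬ p i).val) (· ≤ ·) with hL2def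
  -- L1 is sorted
  have hS1 : L1.Pairwise (· ≤ ·) := by
    rw [hL1def, List.pairwise_ofFn]
    intro a b hab
    exact mono a b hab b.isLt
  -- L1 as a multiset is the multiset of selected weights
  have hL1eq : L1 = List.map w (List.ofFn fun t : Fin k => idx (t : ℕ)) := by
    rw [List.map_ofFn, hL1def]
    congr 1
    funext t
    exact hoW t t.isLt
  have hMS : ((List.ofFn fun t : Fin k => idx (t : ℕ) : List (Fin n)) : Multiset (Fin n))
      = (Finset.univ.filter p).val := by
    rw [Multiset.Nodup.ext (by exact List.nodup_ofFn.mpr hinj) (Finset.univ.filter p).nodup]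
    intro a
    simp only [Multiset.mem_coe, List.mem_ofFn, Set.mem_range, Finset.mem_val,
      Finset.mem_filter, Finset.mem_univ, true_and, hp]
    constructor
    · rintro ⟨t, ht⟩; exact ⟨t, t.isLt, ht⟩
    · rintro ⟨s, hs, he⟩; exact ⟨⟨s, hs⟩, he⟩
  have hcoeL1 : (L1 : Multiset ℕ) = Multiset.map w (Finset.univ.filter p).val := by
    rw [hL1eq, ← hMS, ← Multiset.map_coe]
  -- splitting the full multiset into selected and unselected parts
  have hsplit : Multiset.map w Finset.univ.val
      = Multiset.map w (Finset.univ.filter p).val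
        + Multiset.map w (Finset.univ.filter fun i => ¬ p i).val := by
    rw [← Multiset.map_add]
    congr 1
    simp only [Finset.filter_val]
    exact (Multiset.filter_add_not p _).symm
  have hL2sorted : L2.Pairwise (· ≤ ·) := Multiset.pairwise_sort _ _
  have hcoeL2 : (L2 : Multiset ℕ)
      = Multiset.map w (Finset.univ.filter fun i => ¬ p i).val := Multiset.sort_eq _ _
  -- cross condition
  have hcross : ∀ a ∈ L1, ∀ b ∈ L2, a ≤ b := by
    intro a ha b hb
    rw [hL1def, List.mem_ofFn] at ha
    obtain ⟨t, hta⟩ := ha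
    have hb' : b ∈ (L2 : Multiset ℕ) := hb
    rw [hcoeL2, Multiset.mem_map] at hb'
    obtain ⟨j, hj, hjb⟩ := hb'
    rw [Finset.mem_val, Finset.mem_filter] at hj
    rw [← hta, ← hjb]
    exact hbound t t.isLt j hj.2
  have hsortedAll : (L1 ++ L2).Pairwise (· ≤ ·) :=
    List.pairwise_append.mpr ⟨hS1, hL2sorted, hcross⟩
  -- the concatenation is a permutation of the sorted full multiset
  have hcoeAll : ((L1 ++ L2 : List ℕ) : Multiset ℕ) = Multiset.map w Finset.univ.val := by
    rw [← Multiset.coe_add] at *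
    rw [hcoeL1, hcoeL2, hsplit]
  have hperm : List.Perm (L1 ++ L2) (Multiset.sort (Multiset.map w Finset.univ.val) (· ≤ ·)) := by
    rw [← Multiset.coe_eq_coe, Multiset.sort_eq, hcoeAll]
  have hfinal : Multiset.sort (Multiset.map w Finset.univ.val) (· ≤ ·) = L1 ++ L2 :=
    List.Perm.eq_of_pairwise'
      (Multiset.pairwise_sort _ _) hsortedAll hperm.symm
  refine ⟨hS1, ?_⟩
  rw [hfinal, List.take_left' (by simp [hL1def])]
end

section
/- (Ukkonen NFA prefix invariant) Let α be a type with decidable equality and ψ : List α a pattern of length m. Define the reachability relation Reach i j u ('state q_{i,j} of the Ukkonen automaton of ψ is reachable after consuming the input list u') inductively by: Reach 0 0 []; (horizontal/match) if Reach i j u and the (j+1)-st symbol of ψ is c, then Reach i (j+1) (u ++ [c]); (vertical/insertion) if Reach i j u then Reach (i+1) j (u ++ [c]) for any symbol c; (solid diagonal/substitution) if Reach i j u and j < m then Reach (i+1) (j+1) (u ++ [c]) for any symbol c; (dashed diagonal/deletion) if Reach i j u and j < m then Reach (i+1) (j+1) u. Then for every j ≤ m and every list u, the Levenshtein distance (with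 unit insertion, deletion and substitution costs) between u and the length-j prefix of ψ is the least natural number i such that Reach i j u holds. -/
namespace Levenshtein

structure Cost (α β δ : Type*) where
  delete : α → δ
  insert : β → δ
  substitute : α → β → δ

def defaultCost {α : Type*} [DecidableEq α] : Cost α α ℕ where
  delete _ := 1
  insert _ := 1
  substitute a b := if a = b then 0 else 1

def impl {α β δ : Type*} [AddZeroClass δ] [Min δ] (C : Cost α β δ)
    (xs : List α) (y : β) (d : {r : List δ // 0 < r.length}) : {r : List δ // 0 < r.length} :=
  let ⟨ds, w⟩ := d
  xs.zip (ds.zip ds.tail) |>.foldr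
    (init := ⟨[C.insert y + ds.getLast (by rintro rfl; simp at w)], by simp⟩)
    (fun ⟨x, d₀, d₁⟩ ⟨r, w⟩ =>
      ⟨min (C.delete x + r[0]) (min (C.insert y + d₀) (C.substitute x y + d₁)) :: r, by simp⟩)

end Levenshtein

def suffixLevenshtein {α β δ : Type*} [AddZeroClass δ] [Min δ] (C : Levenshtein.Cost α β δ)
    (xs : List α) (ys : List β) : {r : List δ // 0 < r.length} :=
  ys.foldr
    (Levenshtein.impl C xs)
    (xs.foldr (init := ⟨[0], by simp⟩) (fun a ⟨r, w⟩ => ⟨(C.delete a + r[0]) :: r, by simp⟩))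

def levenshtein {α β δ : Type*} [AddZeroClass δ] [Min δ] (C : Levenshtein.Cost α β δ)
    (xs : List α) (ys : List β) : δ :=
  let ⟨r, _⟩ := suffixLevenshtein C xs ys
  r[0]

/-- `UkkonenReach ψ i j u` : state `q_{i,j}` of the Ukkonen NFA of the pattern `ψ`
is reachable after consuming the input list `u`. -/
inductive UkkonenReach {α : Type*} (ψ : List α) : ℕ → ℕ → List α → Prop
  | base : UkkonenReach ψ 0 0 []
  | horiz {i j : ℕ} {u : List α} {c : α} :
      UkkonenReach ψ i j u → ψ[j]? = some c → UkkonenReach ψ i (j + 1) (u ++ [c])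
  | insert {i j : ℕ} {u : List α} (c : α) :
      UkkonenReach ψ i j u → UkkonenReach ψ (i + 1) j (u ++ [c])
  | subst {i j : ℕ} {u : List α} (c : α) :
      UkkonenReach ψ i j u → j < ψ.length → UkkonenReach ψ (i + 1) (j + 1) (u ++ [c])
  | del {i j : ℕ} {u : List α} :
      UkkonenReach ψ i j u → j < ψ.length → UkkonenReach ψ (i + 1) (j + 1) u

namespace UkkAux

/-- Snoc-based alignment relation: `Aligned i u v` means there is an edit script
of cost exactly `i` aligning `u` with `v`, built by appending at the right. -/
inductive Aligned {α : Type*} : ℕ → List α → List α → Prop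
  | base : Aligned 0 [] []
  | mtch {i u v} (c : α) : Aligned i u v → Aligned i (u ++ [c]) (v ++ [c])
  | ins {i u v} (c : α) : Aligned i u v → Aligned (i + 1) (u ++ [c]) v
  | sub {i u v} (c b : α) : Aligned i u v → Aligned (i + 1) (u ++ [c]) (v ++ [b])
  | del {i u v} (b : α) : Aligned i u v → Aligned (i + 1) u (v ++ [b])

/-- Cons-based alignment relation. -/
inductive AL {α : Type*} : ℕ → List α → List α → Prop
  | base : AL 0 [] []
  | mtch {i u v} (c : α) : AL i u v → AL i (c :: u) (c :: v)
  | ins {i u v} (c : α) : AL i u v → AL (i + 1) (c :: u) v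
  | sub {i u v} (c b : α) : AL i u v → AL (i + 1) (c :: u) (b :: v)
  | del {i u v} (b : α) : AL i u v → AL (i + 1) u (b :: v)

variable {α : Type*}

lemma AL.snoc_mtch {i : ℕ} {u v : List α} (c : α) (h : AL i u v) :
    AL i (u ++ [c]) (v ++ [c]) := by
  induction h with
  | base => exact .mtch c .base
  | mtch c' _ ih => exact .mtch c' ih
  | ins c' _ ih => exact .ins c' ih
  | sub c' b' _ ih => exact .sub c' b' ih
  | del b' _ ih => exact .del b' ih

lemma AL.snoc_ins {i : ℕ} {u v : List α} (c : α) (h : AL i u v) :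
    AL (i + 1) (u ++ [c]) v := by
  induction h with
  | base => exact .ins c .base
  | mtch c' _ ih => exact .mtch c' ih
  | ins c' _ ih => exact .ins c' ih
  | sub c' b' _ ih => exact .sub c' b' ih
  | del b' _ ih => exact .del b' ih

lemma AL.snoc_sub {i : ℕ} {u v : List α} (c b : α) (h : AL i u v) :
    AL (i + 1) (u ++ [c]) (v ++ [b]) := by
  induction h with
  | base => exact .sub c b .base
  | mtch c' _ ih => exact .mtch c' ih
  | ins c' _ ih => exact .ins c' ih
  | sub c' b' _ ih => exact .sub c' b' ih
  | del b' _ ih => exact .del b' ih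

lemma AL.snoc_del {i : ℕ} {u v : List α} (b : α) (h : AL i u v) :
    AL (i + 1) u (v ++ [b]) := by
  induction h with
  | base => exact .del b .base
  | mtch c' _ ih => exact .mtch c' ih
  | ins c' _ ih => exact .ins c' ih
  | sub c' b' _ ih => exact .sub c' b' ih
  | del b' _ ih => exact .del b' ih

lemma Aligned.cons_mtch {i : ℕ} {u v : List α} (c : α) (h : Aligned i u v) :
    Aligned i (c :: u) (c :: v) := by
  induction h with
  | base => exact .mtch c .base
  | mtch c' _ ih => exact .mtch c' ih
  | ins c' _ ih => exact .ins c' ih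
  | sub c' b' _ ih => exact .sub c' b' ih
  | del b' _ ih => exact .del b' ih

lemma Aligned.cons_ins {i : ℕ} {u v : List α} (c : α) (h : Aligned i u v) :
    Aligned (i + 1) (c :: u) v := by
  induction h with
  | base => exact .ins c .base
  | mtch c' _ ih => exact .mtch c' ih
  | ins c' _ ih => exact .ins c' ih
  | sub c' b' _ ih => exact .sub c' b' ih
  | del b' _ ih => exact .del b' ih

lemma Aligned.cons_sub {i : ℕ} {u v : List α} (c b : α) (h : Aligned i u v) :
    Aligned (i + 1) (c :: u) (b :: v) := by
  induction h with
  | base => exact .sub c b .base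
  | mtch c' _ ih => exact .mtch c' ih
  | ins c' _ ih => exact .ins c' ih
  | sub c' b' _ ih => exact .sub c' b' ih
  | del b' _ ih => exact .del b' ih

lemma Aligned.cons_del {i : ℕ} {u v : List α} (b : α) (h : Aligned i u v) :
    Aligned (i + 1) u (b :: v) := by
  induction h with
  | base => exact .del b .base
  | mtch c' _ ih => exact .mtch c' ih
  | ins c' _ ih => exact .ins c' ih
  | sub c' b' _ ih => exact .sub c' b' ih
  | del b' _ ih => exact .del b' ih

lemma AL.toAligned {i : ℕ} {u v : List α} (h : AL i u v) : Aligned i u v := by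
  induction h with
  | base => exact .base
  | mtch c _ ih => exact ih.cons_mtch c
  | ins c _ ih => exact ih.cons_ins c
  | sub c b _ ih => exact ih.cons_sub c b
  | del b _ ih => exact ih.cons_del b

open Levenshtein

section LevLemmas
variable {β δ : Type*} [AddZeroClass δ] [Min δ] (C : Cost α β δ)

lemma impl_length' (xs : List α) (y : β) (d : {r : List δ // 0 < r.length})
    (w : d.1.length = xs.length + 1) :
    (impl C xs y d).1.length = xs.length + 1 := by
  induction xs generalizing d with
  | nil => rfl
  | cons x xs ih =>
    dsimp [impl]
    match d, w with
    | ⟨d₁ :: d₂ :: ds, _⟩, w =>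
      dsimp
      congr 1
      exact ih ⟨d₂ :: ds, (by simp)⟩ (by simpa using w)

lemma suffixLevenshtein_length' (xs : List α) (ys : List β) :
    (suffixLevenshtein C xs ys).1.length = xs.length + 1 := by
  induction ys with
  | nil =>
    dsimp [suffixLevenshtein]
    induction xs with
    | nil => rfl
    | cons _ xs ih => simp_all
  | cons y ys ih =>
    dsimp [suffixLevenshtein]
    rw [impl_length']
    exact ih

lemma suffixLevenshtein_cons₁_aux' {x y : {r : List δ // 0 < r.length}}
    (w₀ : x.1[0]'x.2 = y.1[0]'y.2) (w : x.1.tail = y.1.tail) : x = y := by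
  match x, y with
  | ⟨hx :: tx, _⟩, ⟨hy :: ty, _⟩ => simp_all

lemma suffixLevenshtein_cons₁' (x : α) (xs : List α) (ys : List β) :
    suffixLevenshtein C (x :: xs) ys =
      ⟨levenshtein C (x :: xs) ys :: (suffixLevenshtein C xs ys).1, by simp⟩ := by
  induction ys with
  | nil => rfl
  | cons y ys ih =>
    apply suffixLevenshtein_cons₁_aux'
    · rfl
    · show (impl C (x :: xs) y (suffixLevenshtein C (x :: xs) ys)).1.tail = _
      rw [ih]
      have hl := suffixLevenshtein_length' C xs ys
      show _ = (impl C xs y (suffixLevenshtein C xs ys)).1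
      obtain ⟨ds, hds⟩ := suffixLevenshtein C xs ys
      match ds, hds with
      | _ :: _, _ => rfl

@[simp] lemma levenshtein_nil_nil : levenshtein C ([] : List α) ([] : List β) = 0 := rfl

@[simp] lemma levenshtein_nil_cons (y : β) (ys : List β) :
    levenshtein C ([] : List α) (y :: ys) = C.insert y + levenshtein C [] ys := by
  have hl := suffixLevenshtein_length' C ([] : List α) ys
  unfold levenshtein
  show (impl C [] y (suffixLevenshtein C [] ys)).1[0]'(by
    rw [impl_length']; simp; exact hl) = _
  generalize_proofs
  revert ‹_›
  revert hl
  obtain ⟨ds, hds⟩ := suffixLevenshtein C ([] : List α) ys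
  intro hl
  simp only [List.length_nil] at hl
  match ds, hds, hl with
  | [d], _, _ => intro _; rfl
  | _ :: _ :: _, _, hl => simp at hl

@[simp] lemma levenshtein_cons_nil (x : α) (xs : List α) :
    levenshtein C (x :: xs) ([] : List β) = C.delete x + levenshtein C xs [] := rfl

@[simp] lemma levenshtein_cons_cons (x : α) (xs : List α) (y : β) (ys : List β) :
    levenshtein C (x :: xs) (y :: ys) =
      min (C.delete x + levenshtein C xs (y :: ys))
        (min (C.insert y + levenshtein C (x :: xs) ys)
          (C.substitute x y + levenshtein C xs ys)) := by
  have hl := suffixLevenshtein_length' C xs ys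
  have e0 : levenshtein C (x :: xs) (y :: ys) =
      (impl C (x :: xs) y (suffixLevenshtein C (x :: xs) ys)).1[0]'(by
        rw [impl_length']; simp; exact suffixLevenshtein_length' C _ _) := rfl
  have e3 := suffixLevenshtein_cons₁' C x xs ys
  have hcg : ∀ (s t : {r : List δ // 0 < r.length}) (h : s = t) p q,
      (impl C (x :: xs) y s).1[0]'p = (impl C (x :: xs) y t).1[0]'q := by
    intro s t h p q; subst h; rfl
  have aux : ∀ (d : δ) (s : {r : List δ // 0 < r.length}) p p1 p2,
      (impl C (x :: xs) y ⟨d :: s.1, p⟩).1[0]'p1 =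
        min (C.delete x + (impl C xs y s).1[0]'p2)
          (min (C.insert y + d) (C.substitute x y + s.1[0]'s.2)) := by
    intro d s p p1 p2
    obtain ⟨ds, hds⟩ := s
    match ds, hds with
    | _ :: _, _ => rfl
  rw [e0, hcg _ _ e3 _ (by rw [impl_length'] <;> simp [hl]), aux _ _ _ _
    (by rw [impl_length'] <;> simp [hl])]
  rfl

end LevLemmas

@[simp] lemma defaultCost_delete [DecidableEq α] (a : α) :
    (defaultCost : Cost α α ℕ).delete a = 1 := rfl
@[simp] lemma defaultCost_insert [DecidableEq α] (a : α) :
    (defaultCost : Cost α α ℕ).insert a = 1 := rfl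
@[simp] lemma defaultCost_substitute [DecidableEq α] (a b : α) :
    (defaultCost : Cost α α ℕ).substitute a b = if a = b then 0 else 1 := rfl

section Lev
variable [DecidableEq α]

lemma al_lev : ∀ (u v : List α), AL (levenshtein defaultCost u v) u v := by
  intro u
  induction u with
  | nil =>
    intro v
    induction v with
    | nil => simpa using AL.base
    | cons b v ihv =>
      rw [levenshtein_nil_cons]
      simp only [defaultCost_insert]
      rw [Nat.add_comm]
      exact .del b ihv
  | cons a u ihu =>
    intro v
    induction v with
    | nil =>
      rw [levenshtein_cons_nil]
      simp only [defaultCost_delete]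
      rw [Nat.add_comm]
      exact .ins a (ihu [])
    | cons b v ihv =>
      rw [levenshtein_cons_cons]
      rcases min_choice (defaultCost.delete a + levenshtein defaultCost u (b :: v))
        (min (defaultCost.insert b + levenshtein defaultCost (a :: u) v)
          (defaultCost.substitute a b + levenshtein defaultCost u v)) with h1 | h1
      · rw [h1]
        simp only [defaultCost_delete]
        rw [Nat.add_comm]
        exact .ins a (ihu (b :: v))
      · rw [h1]
        rcases min_choice (defaultCost.insert b + levenshtein defaultCost (a :: u) v)
          (defaultCost.substitute a b + levenshtein defaultCost u v) with h2 | h2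
        · rw [h2]
          simp only [defaultCost_insert]
          rw [Nat.add_comm]
          exact .del b ihv
        · rw [h2]
          by_cases hab : a = b
          · subst hab
            have := AL.mtch a (ihu v)
            simpa using this
          · simp only [defaultCost_substitute, if_neg hab]
            rw [Nat.add_comm]
            exact .sub a b (ihu v)

lemma lev_cons_left_le (c : α) (u v : List α) :
    levenshtein defaultCost (c :: u) v ≤ 1 + levenshtein defaultCost u v := by
  cases v with
  | nil => simp
  | cons b v =>
    rw [levenshtein_cons_cons]
    exact le_trans (min_le_left _ _) (by simp)

lemma lev_cons_right_le (b : α) (u v : List α) :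
    levenshtein defaultCost u (b :: v) ≤ 1 + levenshtein defaultCost u v := by
  cases u with
  | nil => simp
  | cons a u =>
    rw [levenshtein_cons_cons]
    exact le_trans (min_le_right _ _) (le_trans (min_le_left _ _) (by simp))

lemma lev_cons_cons_le (c b : α) (u v : List α) :
    levenshtein defaultCost (c :: u) (b :: v) ≤ 1 + levenshtein defaultCost u v := by
  rw [levenshtein_cons_cons]
  refine le_trans (min_le_right _ _) (le_trans (min_le_right _ _) ?_)
  have : defaultCost.substitute c b ≤ 1 := by
    simp only [defaultCost_substitute]; split <;> omega
  omega

lemma lev_mtch_le (c : α) (u v : List α) :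
    levenshtein defaultCost (c :: u) (c :: v) ≤ levenshtein defaultCost u v := by
  rw [levenshtein_cons_cons]
  refine le_trans (min_le_right _ _) (le_trans (min_le_right _ _) ?_)
  simp

lemma lev_le_of_al {i : ℕ} {u v : List α} (h : AL i u v) :
    levenshtein defaultCost u v ≤ i := by
  induction h with
  | base => simp
  | mtch c _ ih => exact le_trans (lev_mtch_le c _ _) ih
  | ins c _ ih =>
    refine le_trans (lev_cons_left_le c _ _) ?_; omega
  | sub c b _ ih =>
    refine le_trans (lev_cons_cons_le c b _ _) ?_; omega
  | del b _ ih =>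
    refine le_trans (lev_cons_right_le b _ _) ?_; omega

end Lev

lemma take_succ_of_lt (ψ : List α) {j : ℕ} (h : j < ψ.length) :
    ψ.take (j + 1) = ψ.take j ++ [ψ.get ⟨j, h⟩] := by
  rw [List.take_succ, List.getElem?_eq_getElem h]
  rfl

lemma reach_al {ψ : List α} {i j : ℕ} {u : List α} (h : UkkonenReach ψ i j u) :
    AL i u (ψ.take j) := by
  induction h with
  | base => exact .base
  | horiz _ hc ih =>
    rename_i i j u c _
    have hj : j < ψ.length := by
      by_contra hcon
      rw [List.getElem?_eq_none (by omega)] at hc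
      cases hc
    have hcc : ψ.get ⟨j, hj⟩ = c := by
      rw [List.getElem?_eq_getElem hj] at hc
      simpa using hc
    rw [take_succ_of_lt ψ hj, hcc]
    exact ih.snoc_mtch c
  | insert c _ ih => exact ih.snoc_ins c
  | subst c _ hj ih =>
    rw [take_succ_of_lt ψ hj]
    exact ih.snoc_sub c _
  | del _ hj ih =>
    rw [take_succ_of_lt ψ hj]
    exact ih.snoc_del _

lemma aligned_reach {ψ : List α} {i : ℕ} {u v : List α} (h : Aligned i u v) :
    ∀ j ≤ ψ.length, v = ψ.take j → UkkonenReach ψ i j u := by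
  induction h with
  | base =>
    intro j hj hv
    have : j = 0 := by
      rcases List.take_eq_nil_iff.mp hv.symm with h | h
      · exact h
      · simp [h] at hj; omega
    subst this; exact .base
  | mtch c h ih =>
    rename_i i u v
    intro j hj hv
    have hlen : v.length + 1 = j := by
      have := congrArg List.length hv
      simp [List.length_take, Nat.min_eq_left hj] at this
      omega
    obtain ⟨j', rfl⟩ : ∃ j', j = j' + 1 := ⟨v.length, hlen.symm⟩
    have hj' : j' < ψ.length := by omega
    rw [take_succ_of_lt ψ hj'] at hv
    obtain ⟨hv', hc⟩ : v = ψ.take j' ∧ c = ψ.get ⟨j', hj'⟩ := by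
      have := List.append_inj' hv rfl
      simpa using this
    have hget : ψ[j']? = some c := by
      rw [List.getElem?_eq_getElem hj']
      exact congrArg some hc.symm
    exact .horiz (ih j' (by omega) hv') hget
  | ins c h ih =>
    intro j hj hv
    exact .insert c (ih j hj hv)
  | sub c b h ih =>
    rename_i i u v
    intro j hj hv
    have hlen : v.length + 1 = j := by
      have := congrArg List.length hv
      simp [List.length_take, Nat.min_eq_left hj] at this
      omega
    obtain ⟨j', rfl⟩ : ∃ j', j = j' + 1 := ⟨v.length, hlen.symm⟩
    have hj' : j' < ψ.length := by omega
    rw [take_succ_of_lt ψ hj'] at hv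
    obtain ⟨hv', hc⟩ : v = ψ.take j' ∧ b = ψ.get ⟨j', hj'⟩ := by
      have := List.append_inj' hv rfl
      simpa using this
    exact .subst c (ih j' (by omega) hv') hj'
  | del b h ih =>
    rename_i i u v
    intro j hj hv
    have hlen : v.length + 1 = j := by
      have := congrArg List.length hv
      simp [List.length_take, Nat.min_eq_left hj] at this
      omega
    obtain ⟨j', rfl⟩ : ∃ j', j = j' + 1 := ⟨v.length, hlen.symm⟩
    have hj' : j' < ψ.length := by omega
    rw [take_succ_of_lt ψ hj'] at hv
    obtain ⟨hv', hc⟩ : v = ψ.take j' ∧ b = ψ.get ⟨j', hj'⟩ := by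
      have := List.append_inj' hv rfl
      simpa using this
    exact .del (ih j' (by omega) hv') hj'

end UkkAux

/-- **Ukkonen NFA prefix invariant.** For every `j ≤ m` and every input list `u`, the
Levenshtein distance (unit costs) between `u` and the length-`j` prefix of the pattern `ψ`
is the least row index `i` such that state `q_{i,j}` is reachable on input `u`. -/
theorem ukkonen_prefix_invariant {α : Type*} [DecidableEq α] (ψ : List α)
    (j : ℕ) (hj : j ≤ ψ.length) (u : List α) :
    IsLeast {i : ℕ | UkkonenReach ψ i j u}
      (levenshtein Levenshtein.defaultCost u (ψ.take j)) := by
  constructor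
  · exact UkkAux.aligned_reach (UkkAux.AL.toAligned (UkkAux.al_lev u (ψ.take j))) j hj rfl
  · intro i hi
    exact UkkAux.lev_le_of_al (UkkAux.reach_al hi)
end
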